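/- arXiv:1810.02708 — 9 statements merged into one kernel-verified Lean document; each statement's English description precedes it below -/
import Mathlib

section
/- Let U be an n×n unitary matrix, let J = {1,...,n}, and let α, β be subsets of J. Then rank(U(α,β)) = rank(U(J\α, J\β)) + |α| + |β| - n, where U(α,β) denotes the submatrix of U with rows indexed by α and columns by β. -/
open Matrix Module
open scoped ComplexOrder

theorem stmt_0 {n : ℕ} (U : Matrix (Fin n) (Fin n) ℂ)
    (hU : U ∈ Matrix.unitaryGroup (Fin n) ℂ) (α β : Finset (Fin n)) :
    (U.submatrix (fun i : {x // x ∈ α} => (i : Fin n))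
        (fun j : {x // x ∈ β} => (j : Fin n))).rank + n =
    (U.submatrix (fun i : {x // x ∈ αᶜ} => (i : Fin n))
        (fun j : {x // x ∈ βᶜ} => (j : Fin n))).rank + α.card + β.card := by
  classical
  set A := U.submatrix (fun i : {x // x ∈ α} => (i : Fin n))
      (fun j : {x // x ∈ β} => (j : Fin n)) with hA
  set B := U.submatrix (fun i : {x // x ∈ α} => (i : Fin n))
      (fun j : {x // x ∈ βᶜ} => (j : Fin n)) with hB
  set C := U.submatrix (fun i : {x // x ∈ αᶜ} => (i : Fin n))
      (fun j : {x // x ∈ β} => (j : Fin n)) with hC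
  set D := U.submatrix (fun i : {x // x ∈ αᶜ} => (i : Fin n))
      (fun j : {x // x ∈ βᶜ} => (j : Fin n)) with hD
  have hU1 : Uᴴ * U = 1 := hU.1
  have hU2 : U * Uᴴ = 1 := hU.2
  -- helper for splitting sums
  have split : ∀ (s : Finset (Fin n)) (f : Fin n → ℂ),
      (∑ i : {x // x ∈ s}, f i) + (∑ i : {x // x ∈ sᶜ}, f i) = ∑ i, f i := by
    intro s f
    rw [Finset.sum_coe_sort s f, Finset.sum_coe_sort sᶜ f]
    exact Finset.sum_add_sum_compl s f
  have id1 : Aᴴ * A + Cᴴ * C = 1 := by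
    ext j k
    have hsum := split α (fun i => star (U i j) * U i k)
    have h2 : (Uᴴ * U) (j : Fin n) (k : Fin n) = (1 : Matrix (Fin n) (Fin n) ℂ) (j : Fin n) k := by
      rw [hU1]
    simp only [Matrix.mul_apply, Matrix.conjTranspose_apply] at h2
    simp only [Matrix.add_apply, Matrix.mul_apply, Matrix.conjTranspose_apply, hA, hC,
      Matrix.submatrix_apply]
    rw [hsum, h2, Matrix.one_apply, Matrix.one_apply]
    by_cases h : j = k
    · subst h; simp
    · have h' : (j : Fin n) ≠ k := fun e => h (Subtype.ext e)
      simp [h, h']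
  have id2 : Bᴴ * A + Dᴴ * C = 0 := by
    ext k j
    have hsum := split α (fun i => star (U i k) * U i j)
    have h2 : (Uᴴ * U) (k : Fin n) (j : Fin n) = (1 : Matrix (Fin n) (Fin n) ℂ) (k : Fin n) j := by
      rw [hU1]
    simp only [Matrix.mul_apply, Matrix.conjTranspose_apply] at h2
    have hne : (k : Fin n) ≠ (j : Fin n) := by
      intro h
      have hk := k.2
      rw [h] at hk
      exact (Finset.mem_compl.mp hk) j.2
    simp only [Matrix.add_apply, Matrix.mul_apply, Matrix.conjTranspose_apply, hA, hB, hC, hD,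
      Matrix.submatrix_apply]
    rw [hsum, h2, Matrix.one_apply]
    simp [hne]
  have id3 : C * Cᴴ + D * Dᴴ = 1 := by
    ext i k
    have hsum := split β (fun j => U i j * star (U k j))
    have h2 : (U * Uᴴ) (i : Fin n) (k : Fin n) = (1 : Matrix (Fin n) (Fin n) ℂ) (i : Fin n) k := by
      rw [hU2]
    simp only [Matrix.mul_apply, Matrix.conjTranspose_apply] at h2
    simp only [Matrix.add_apply, Matrix.mul_apply, Matrix.conjTranspose_apply, hC, hD,
      Matrix.submatrix_apply]
    rw [hsum, h2, Matrix.one_apply, Matrix.one_apply]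
    by_cases h : i = k
    · subst h; simp
    · have h' : (i : Fin n) ≠ k := fun e => h (Subtype.ext e)
      simp [h, h']
  have id4 : A * Cᴴ + B * Dᴴ = 0 := by
    ext i k
    have hsum := split β (fun j => U i j * star (U k j))
    have h2 : (U * Uᴴ) (i : Fin n) (k : Fin n) = (1 : Matrix (Fin n) (Fin n) ℂ) (i : Fin n) k := by
      rw [hU2]
    simp only [Matrix.mul_apply, Matrix.conjTranspose_apply] at h2
    have hne : (i : Fin n) ≠ (k : Fin n) := by
      intro h
      have hk := k.2
      rw [← h] at hk
      exact (Finset.mem_compl.mp hk) i.2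
    simp only [Matrix.add_apply, Matrix.mul_apply, Matrix.conjTranspose_apply, hA, hB, hC, hD,
      Matrix.submatrix_apply]
    rw [hsum, h2, Matrix.one_apply]
    simp [hne]
  -- kernel maps
  have hmapC : ∀ x ∈ LinearMap.ker A.mulVecLin,
      C.mulVecLin x ∈ LinearMap.ker (Dᴴ).mulVecLin := by
    intro x hx
    rw [LinearMap.mem_ker] at hx ⊢
    simp only [Matrix.mulVecLin_apply] at hx ⊢
    have : (Bᴴ * A + Dᴴ * C).mulVec x = 0 := by rw [id2, Matrix.zero_mulVec]
    rw [Matrix.add_mulVec, ← Matrix.mulVec_mulVec, ← Matrix.mulVec_mulVec, hx,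
      Matrix.mulVec_zero, zero_add] at this
    exact this
  have hmapC' : ∀ y ∈ LinearMap.ker (Dᴴ).mulVecLin,
      (Cᴴ).mulVecLin y ∈ LinearMap.ker A.mulVecLin := by
    intro y hy
    rw [LinearMap.mem_ker] at hy ⊢
    simp only [Matrix.mulVecLin_apply] at hy ⊢
    have : (A * Cᴴ + B * Dᴴ).mulVec y = 0 := by rw [id4, Matrix.zero_mulVec]
    rw [Matrix.add_mulVec, ← Matrix.mulVec_mulVec, ← Matrix.mulVec_mulVec, hy,
      Matrix.mulVec_zero, add_zero] at this
    exact this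
  have hinj1 : Function.Injective (C.mulVecLin.restrict hmapC) := by
    rw [← LinearMap.ker_eq_bot, LinearMap.ker_eq_bot']
    rintro ⟨x, hx⟩ h
    have hCx : C.mulVec x = 0 := by
      have := congrArg Subtype.val h
      simpa [LinearMap.restrict_apply] using this
    rw [LinearMap.mem_ker, Matrix.mulVecLin_apply] at hx
    have hx0 : x = 0 := by
      have h1 : (Aᴴ * A + Cᴴ * C).mulVec x = x := by rw [id1, Matrix.one_mulVec]
      rw [Matrix.add_mulVec, ← Matrix.mulVec_mulVec, ← Matrix.mulVec_mulVec, hx, hCx,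
        Matrix.mulVec_zero, Matrix.mulVec_zero, add_zero] at h1
      exact h1.symm
    exact Subtype.ext hx0
  have hinj2 : Function.Injective ((Cᴴ).mulVecLin.restrict hmapC') := by
    rw [← LinearMap.ker_eq_bot, LinearMap.ker_eq_bot']
    rintro ⟨y, hy⟩ h
    have hCy : Cᴴ.mulVec y = 0 := by
      have := congrArg Subtype.val h
      simpa [LinearMap.restrict_apply] using this
    rw [LinearMap.mem_ker, Matrix.mulVecLin_apply] at hy
    have hy0 : y = 0 := by
      have h1 : (C * Cᴴ + D * Dᴴ).mulVec y = y := by rw [id3, Matrix.one_mulVec]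
      rw [Matrix.add_mulVec, ← Matrix.mulVec_mulVec, ← Matrix.mulVec_mulVec, hy, hCy,
        Matrix.mulVec_zero, Matrix.mulVec_zero, add_zero] at h1
      exact h1.symm
    exact Subtype.ext hy0
  have hkeq : finrank ℂ (LinearMap.ker A.mulVecLin)
      = finrank ℂ (LinearMap.ker (Dᴴ).mulVecLin) :=
    le_antisymm (LinearMap.finrank_le_finrank_of_injective hinj1)
      (LinearMap.finrank_le_finrank_of_injective hinj2)
  -- rank-nullity
  have r1 : A.rank + finrank ℂ (LinearMap.ker A.mulVecLin) = β.card := by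
    rw [Matrix.rank]
    have := LinearMap.finrank_range_add_finrank_ker A.mulVecLin
    rwa [Module.finrank_fintype_fun_eq_card, Fintype.card_coe] at this
  have r2 : (Dᴴ).rank + finrank ℂ (LinearMap.ker (Dᴴ).mulVecLin) = αᶜ.card := by
    rw [Matrix.rank]
    have := LinearMap.finrank_range_add_finrank_ker (Dᴴ).mulVecLin
    rwa [Module.finrank_fintype_fun_eq_card, Fintype.card_coe] at this
  have r3 : (Dᴴ).rank = D.rank := Matrix.rank_conjTranspose D
  have hcard : α.card + αᶜ.card = n := by
    rw [Finset.card_add_card_compl, Fintype.card_fin]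
  omega
end

section
/- Let U be an n×n unitary matrix. Then for every h with 1 ≤ h ≤ n-1, rank(U(1:h, h+1:n)) = rank(U(h+1:n, 1:h)). -/
open Matrix ComplexOrder

private lemma ker_le_aux {m : ℕ} (A : Matrix (Fin m) (Fin m) ℂ) :
    Module.finrank ℂ (LinearMap.ker ((1 - A * Aᴴ).mulVecLin)) ≤
    Module.finrank ℂ (LinearMap.ker ((1 - Aᴴ * A).mulVecLin)) := by
  have hmap : ∀ v ∈ LinearMap.ker ((1 - A * Aᴴ).mulVecLin),
      Aᴴ.mulVecLin v ∈ LinearMap.ker ((1 - Aᴴ * A).mulVecLin) := by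
    intro v hv
    rw [LinearMap.mem_ker] at hv ⊢
    simp only [mulVecLin_apply, sub_mulVec, one_mulVec, ← mulVec_mulVec, sub_eq_zero] at hv ⊢
    conv_lhs => rw [hv]
  have hinj : Function.Injective
      ((Aᴴ.mulVecLin).restrict hmap) := by
    intro x y hxy
    have hx := x.2
    have hy := y.2
    rw [LinearMap.mem_ker] at hx hy
    simp only [mulVecLin_apply, sub_mulVec, one_mulVec, ← mulVec_mulVec, sub_eq_zero] at hx hy
    have h' : Aᴴ.mulVec x.1 = Aᴴ.mulVec y.1 := congrArg Subtype.val hxy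
    ext1
    rw [hx, hy, h']
  exact LinearMap.finrank_le_finrank_of_injective hinj

private lemma rank_one_sub_aux {m : ℕ} (A : Matrix (Fin m) (Fin m) ℂ) :
    ((1 : Matrix (Fin m) (Fin m) ℂ) - A * Aᴴ).rank = (1 - Aᴴ * A).rank := by
  have hker : Module.finrank ℂ (LinearMap.ker ((1 - A * Aᴴ).mulVecLin)) =
      Module.finrank ℂ (LinearMap.ker ((1 - Aᴴ * A).mulVecLin)) := by
    refine le_antisymm (ker_le_aux A) ?_
    have := ker_le_aux Aᴴ
    rwa [conjTranspose_conjTranspose] at this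
  have h1 := LinearMap.finrank_range_add_finrank_ker ((1 - A * Aᴴ).mulVecLin)
  have h2 := LinearMap.finrank_range_add_finrank_ker ((1 - Aᴴ * A).mulVecLin)
  rw [Module.finrank_fintype_fun_eq_card] at h1 h2
  unfold Matrix.rank
  omega

theorem stmt_1 {n : ℕ} (U : Matrix (Fin n) (Fin n) ℂ)
    (hU : U ∈ Matrix.unitaryGroup (Fin n) ℂ)
    (h : ℕ) (h1 : 1 ≤ h) (h2 : h ≤ n - 1) :
    (U.submatrix (fun i : Fin h => (⟨(i : ℕ), by have := i.isLt; omega⟩ : Fin n))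
        (fun j : Fin (n - h) => (⟨h + (j : ℕ), by have := j.isLt; omega⟩ : Fin n))).rank =
    (U.submatrix (fun i : Fin (n - h) => (⟨h + (i : ℕ), by have := i.isLt; omega⟩ : Fin n))
        (fun j : Fin h => (⟨(j : ℕ), by have := j.isLt; omega⟩ : Fin n))).rank := by
  have hn : h + (n - h) = n := by omega
  let e : Fin h ⊕ Fin (n - h) ≃ Fin n := finSumFinEquiv.trans (finCongr hn)
  have he1 : ∀ i : Fin h, (e (Sum.inl i) : ℕ) = i := by
    intro i; simp [e, finSumFinEquiv]
  have he2 : ∀ j : Fin (n - h), (e (Sum.inr j) : ℕ) = h + j := by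
    intro j; simp [e, finSumFinEquiv]
  set V := U.submatrix e e with hV
  set A := V.toBlocks₁₁ with hA
  set B := V.toBlocks₁₂ with hB
  set C := V.toBlocks₂₁ with hC
  set D := V.toBlocks₂₂ with hD
  have hVblocks : V = fromBlocks A B C D := (fromBlocks_toBlocks V).symm
  have hUU : U * Uᴴ = 1 := hU.2
  have hUU' : Uᴴ * U = 1 := hU.1
  have hVV : V * Vᴴ = 1 := by
    rw [hV, conjTranspose_submatrix, submatrix_mul_equiv, hUU, submatrix_one_equiv]
  have hVV' : Vᴴ * V = 1 := by
    rw [hV, conjTranspose_submatrix, submatrix_mul_equiv, hUU', submatrix_one_equiv]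
  have hBB : B * Bᴴ = 1 - A * Aᴴ := by
    have := hVV
    rw [hVblocks, fromBlocks_conjTranspose, fromBlocks_multiply] at this
    have h11 := congrArg Matrix.toBlocks₁₁ this
    simp only [toBlocks_fromBlocks₁₁, Matrix.toBlocks₁₁] at h11
    have h11' : A * Aᴴ + B * Bᴴ = 1 := by
      ext i j
      have := congrFun (congrFun h11 i) j
      simpa [Matrix.one_apply, Sum.inl.injEq] using this
    exact eq_sub_of_add_eq' h11'
  have hCC : Cᴴ * C = 1 - Aᴴ * A := by
    have := hVV'
    rw [hVblocks, fromBlocks_conjTranspose, fromBlocks_multiply] at this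
    have h11 := congrArg Matrix.toBlocks₁₁ this
    simp only [toBlocks_fromBlocks₁₁, Matrix.toBlocks₁₁] at h11
    have h11' : Aᴴ * A + Cᴴ * C = 1 := by
      ext i j
      have := congrFun (congrFun h11 i) j
      simpa [Matrix.one_apply, Sum.inl.injEq] using this
    exact eq_sub_of_add_eq' h11'
  have hBeq : (U.submatrix (fun i : Fin h => (⟨(i : ℕ), by have := i.isLt; omega⟩ : Fin n))
      (fun j : Fin (n - h) => (⟨h + (j : ℕ), by have := j.isLt; omega⟩ : Fin n))) = B := by
    ext i j
    simp only [hB, Matrix.toBlocks₁₂, hV, Matrix.submatrix_apply, Matrix.of_apply]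
    congr 1
  have hCeq : (U.submatrix (fun i : Fin (n - h) => (⟨h + (i : ℕ), by have := i.isLt; omega⟩ : Fin n))
      (fun j : Fin h => (⟨(j : ℕ), by have := j.isLt; omega⟩ : Fin n))) = C := by
    ext i j
    simp only [hC, Matrix.toBlocks₂₁, hV, Matrix.submatrix_apply, Matrix.of_apply]
    congr 1
  rw [hBeq, hCeq]
  have hrB : B.rank = (1 - A * Aᴴ).rank := by
    rw [← hBB, rank_self_mul_conjTranspose]
  have hrC : C.rank = (1 - Aᴴ * A).rank := by
    rw [← hCC, rank_conjTranspose_mul_self]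
  rw [hrB, hrC, rank_one_sub_aux]
end

section
/- Let U be an n×n unitary matrix and let α, β ⊆ {1,...,n} with |α| = |β|. Then |det(U(α,β))| = |det(U(J\α, J\β))| where J = {1,...,n}. -/
open Matrix

lemma key_block {m k : ℕ} (B : Matrix (Fin m ⊕ Fin k) (Fin m ⊕ Fin k) ℂ)
    (hB : B * Bᴴ = 1) :
    B.toBlocks₂₂.det = B.det * star B.toBlocks₁₁.det := by
  set B11 := B.toBlocks₁₁
  set B12 := B.toBlocks₁₂
  set B21 := B.toBlocks₂₁
  set B22 := B.toBlocks₂₂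
  have h1 : B = fromBlocks B11 B12 B21 B22 := (fromBlocks_toBlocks B).symm
  have hB' : fromBlocks (B11 * B11ᴴ + B12 * B12ᴴ) (B11 * B21ᴴ + B12 * B22ᴴ)
      (B21 * B11ᴴ + B22 * B12ᴴ) (B21 * B21ᴴ + B22 * B22ᴴ) =
      fromBlocks 1 0 0 1 := by
    rw [← fromBlocks_multiply, ← fromBlocks_conjTranspose, ← h1, hB, fromBlocks_one]
  have e11 : B11 * B11ᴴ + B12 * B12ᴴ = 1 := congrArg toBlocks₁₁ hB'
  have e21 : B21 * B11ᴴ + B22 * B12ᴴ = 0 := congrArg toBlocks₂₁ hB'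
  have hprod : B * fromBlocks B11ᴴ 0 B12ᴴ 1 = fromBlocks 1 B12 0 B22 := by
    rw [h1, fromBlocks_multiply]
    simp [e11, e21]
  have hdet := congrArg Matrix.det hprod
  rw [det_mul, det_fromBlocks_zero₁₂, det_fromBlocks_zero₂₁, det_one, det_one,
    det_conjTranspose, one_mul, mul_one] at hdet
  exact hdet.symm

theorem stmt_2 {n m : ℕ} (U : Matrix (Fin n) (Fin n) ℂ)
    (hU : U ∈ Matrix.unitaryGroup (Fin n) ℂ) (α β : Finset (Fin n))
    (hα : α.card = m) (hβ : β.card = m) :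
    Norm.norm (Matrix.det (U.submatrix
        (fun i : Fin m => ((α.orderIsoOfFin hα i : {x // x ∈ α}) : Fin n))
        (fun j : Fin m => ((β.orderIsoOfFin hβ j : {x // x ∈ β}) : Fin n)))) =
    Norm.norm (Matrix.det (U.submatrix
        (fun i : Fin (n - m) =>
          ((αᶜ.orderIsoOfFin (by rw [Finset.card_compl, hα, Fintype.card_fin]) i :
            {x // x ∈ αᶜ}) : Fin n))
        (fun j : Fin (n - m) =>
          ((βᶜ.orderIsoOfFin (by rw [Finset.card_compl, hβ, Fintype.card_fin]) j :
            {x // x ∈ βᶜ}) : Fin n)))) := by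
  have hα' : αᶜ.card = n - m := by rw [Finset.card_compl, hα, Fintype.card_fin]
  have hβ' : βᶜ.card = n - m := by rw [Finset.card_compl, hβ, Fintype.card_fin]
  let e : Fin m ⊕ Fin (n - m) ≃ Fin n :=
    (Equiv.sumCongr (α.orderIsoOfFin hα).toEquiv
      (((αᶜ.orderIsoOfFin hα').toEquiv).trans
        (Equiv.subtypeEquivRight (fun x => Finset.mem_compl)))).trans
      (Equiv.sumCompl (· ∈ α))
  let f : Fin m ⊕ Fin (n - m) ≃ Fin n :=
    (Equiv.sumCongr (β.orderIsoOfFin hβ).toEquiv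
      (((βᶜ.orderIsoOfFin hβ').toEquiv).trans
        (Equiv.subtypeEquivRight (fun x => Finset.mem_compl)))).trans
      (Equiv.sumCompl (· ∈ β))
  set B : Matrix (Fin m ⊕ Fin (n - m)) (Fin m ⊕ Fin (n - m)) ℂ := U.submatrix e f with hBdef
  have hUU : U * Uᴴ = 1 := (Matrix.mem_unitaryGroup_iff).mp hU
  have hB : B * Bᴴ = 1 := by
    rw [hBdef, conjTranspose_submatrix, submatrix_mul_equiv, hUU, submatrix_one_equiv]
  have hkey := key_block B hB
  have hL : (U.submatrix
        (fun i : Fin m => ((α.orderIsoOfFin hα i : {x // x ∈ α}) : Fin n))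
        (fun j : Fin m => ((β.orderIsoOfFin hβ j : {x // x ∈ β}) : Fin n))) = B.toBlocks₁₁ := rfl
  have hR : (U.submatrix
        (fun i : Fin (n - m) => ((αᶜ.orderIsoOfFin hα' i : {x // x ∈ αᶜ}) : Fin n))
        (fun j : Fin (n - m) => ((βᶜ.orderIsoOfFin hβ' j : {x // x ∈ βᶜ}) : Fin n))) =
      B.toBlocks₂₂ := rfl
  have habs : Norm.norm B.det = 1 := by
    have := congrArg Matrix.det hB
    rw [det_mul, det_conjTranspose, det_one] at this
    have h2 : Norm.norm B.det * Norm.norm B.det = 1 := by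
      have := congrArg Norm.norm this
      rwa [norm_mul, Complex.star_def, Complex.norm_conj, norm_one] at this
    nlinarith [norm_nonneg B.det]
  rw [hL, hR, hkey, norm_mul, habs, one_mul, Complex.star_def]
  exact (Complex.norm_conj _).symm
end

section
/- Let X be an m×k complex matrix of full rank k with k < m, and let H be a unitary k-upper Hessenberg matrix with H·X = T where T(1:k,1:k) is upper triangular nonsingular and T(k+1:m,:) = 0. Then the product of the moduli of the outermost entries of H satisfies ∏_{i=1}^{m-k} |h_{i+k,i}| = |det(X(m-k+1:m, 1:k))| / ∏_{i=1}^k σ_i(X), where σ_i(X) are the singular values of X. -/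
open scoped Matrix
set_option maxHeartbeats 1600000

theorem stmt_4 {m k : ℕ} (hk : k < m) (X : Matrix (Fin m) (Fin k) ℂ) (hX : X.rank = k)
    (H : Matrix (Fin m) (Fin m) ℂ) (hH : H ∈ Matrix.unitaryGroup (Fin m) ℂ)
    (hHess : ∀ i j : Fin m, (j : ℕ) + k < (i : ℕ) → H i j = 0)
    (T : Matrix (Fin m) (Fin k) ℂ) (hT : H * X = T)
    (hTtri : ∀ i j : Fin k, (j : ℕ) < (i : ℕ) → T (Fin.castLE hk.le i) j = 0)
    (hTbot : ∀ i : Fin m, k ≤ (i : ℕ) → ∀ j, T i j = 0)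
    (hTinv : IsUnit (Matrix.det (Matrix.of fun i j : Fin k => T (Fin.castLE hk.le i) j))) :
    ∏ i : Fin (m - k),
        Norm.norm (H ⟨(i : ℕ) + k, by have := i.isLt; omega⟩
          ⟨(i : ℕ), by have := i.isLt; omega⟩) =
      Norm.norm (Matrix.det (Matrix.of fun i j : Fin k =>
          X ⟨m - k + (i : ℕ), by have := i.isLt; omega⟩ j)) /
        Real.sqrt (Norm.norm (Matrix.det (Xᴴ * X))) := by
  classical
  have hkm : k + (m - k) = m := by omega
  have hmk : (m - k) + k = m := by omega
  set er : Fin k ⊕ Fin (m - k) ≃ Fin m := finSumFinEquiv.trans (finCongr hkm) with her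
  set ec : Fin (m - k) ⊕ Fin k ≃ Fin m := finSumFinEquiv.trans (finCongr hmk) with hec
  set H' : Matrix (Fin k ⊕ Fin (m - k)) (Fin (m - k) ⊕ Fin k) ℂ := H.submatrix er ec with hH'
  set A := H'.toBlocks₁₁ with hA
  set B := H'.toBlocks₁₂ with hB
  set C := H'.toBlocks₂₁ with hC
  set D := H'.toBlocks₂₂ with hD
  set R : Matrix (Fin k) (Fin k) ℂ := Matrix.of fun i j => T (Fin.castLE hk.le i) j with hR
  -- unitarity
  have hu1 : Hᴴ * H = 1 := hH.1
  have hu2 : H * Hᴴ = 1 := hH.2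
  have hH'eq : H' = Matrix.fromBlocks A B C D := (Matrix.fromBlocks_toBlocks H').symm
  have hu1' : H'ᴴ * H' = 1 := by
    rw [hH', Matrix.conjTranspose_submatrix, Matrix.submatrix_mul_equiv, hu1,
      Matrix.submatrix_one_equiv]
  have hu2' : H' * H'ᴴ = 1 := by
    rw [hH', Matrix.conjTranspose_submatrix, Matrix.submatrix_mul_equiv, hu2,
      Matrix.submatrix_one_equiv]
  -- block identities
  have hblock1 : A * Aᴴ + B * Bᴴ = 1 := by
    have := hu2'
    rw [hH'eq, Matrix.fromBlocks_conjTranspose, Matrix.fromBlocks_multiply,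
      ← Matrix.fromBlocks_one] at this
    exact congrArg Matrix.toBlocks₁₁ this
  have hblock2 : Aᴴ * A + Cᴴ * C = 1 := by
    have := hu1'
    rw [hH'eq, Matrix.fromBlocks_conjTranspose, Matrix.fromBlocks_multiply,
      ← Matrix.fromBlocks_one] at this
    exact congrArg Matrix.toBlocks₁₁ this
  -- |det B| = |det C|
  have hdetBC : (B * Bᴴ).det = (Cᴴ * C).det := by
    have h1 : B * Bᴴ = 1 - A * Aᴴ := by
      rw [← hblock1]; abel
    have h2 : Cᴴ * C = 1 - Aᴴ * A := by
      rw [← hblock2]; abel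
    rw [h1, h2, Matrix.det_one_sub_mul_comm]
  have habsBC : Norm.norm B.det = Norm.norm C.det := by
    have e1 : Norm.norm B.det ^ 2 = Norm.norm C.det ^ 2 := by
      have e2 : (B * Bᴴ).det = B.det * star B.det := by
        rw [Matrix.det_mul, Matrix.det_conjTranspose]
      have e3 : (Cᴴ * C).det = star C.det * C.det := by
        rw [Matrix.det_mul, Matrix.det_conjTranspose]
      have := congrArg Norm.norm (e2 ▸ e3 ▸ hdetBC)
      simpa [norm_mul, Complex.norm_conj, sq, mul_comm] using this
    have h1 := norm_nonneg B.det
    have h2 := norm_nonneg C.det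
    nlinarith
  -- key index computations
  have her1 : ∀ l : Fin k, er (Sum.inl l) = Fin.castLE hk.le l := by
    intro l; ext; simp [her]
  have her2 : ∀ l : Fin (m - k), ((er (Sum.inr l) : Fin m) : ℕ) = k + l := by
    intro l; simp [her]
  have hec1 : ∀ l : Fin (m - k), ((ec (Sum.inl l) : Fin m) : ℕ) = l := by
    intro l; simp [hec]
  have hec2 : ∀ l : Fin k, ((ec (Sum.inr l) : Fin m) : ℕ) = (m - k) + l := by
    intro l; simp [hec]
  -- X = Hᴴ * T
  have hXT : X = Hᴴ * T := by
    have : Hᴴ * (H * X) = Hᴴ * T := by rw [hT]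
    rwa [← Matrix.mul_assoc, hu1, Matrix.one_mul] at this
  -- Xᴴ X = Rᴴ R
  have hXX : Xᴴ * X = Rᴴ * R := by
    have hTT : Xᴴ * X = Tᴴ * T := by
      rw [hXT, Matrix.conjTranspose_mul, Matrix.conjTranspose_conjTranspose,
        Matrix.mul_assoc, ← Matrix.mul_assoc H, hu2, Matrix.one_mul]
    rw [hTT]
    ext i j
    rw [Matrix.mul_apply, Matrix.mul_apply, ← Equiv.sum_comp er, Fintype.sum_sum_type]
    have hz : ∀ l : Fin (m - k), Tᴴ i (er (Sum.inr l)) * T (er (Sum.inr l)) j = 0 := by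
      intro l
      rw [hTbot (er (Sum.inr l)) (by rw [her2]; omega) j, mul_zero]
    simp only [hz, Finset.sum_const_zero, add_zero]
    apply Finset.sum_congr rfl
    intro l _
    rw [her1, Matrix.conjTranspose_apply, Matrix.conjTranspose_apply]
    rfl
  -- bottom of X equals Bᴴ * R
  have hXb : (Matrix.of fun i j : Fin k =>
      X ⟨m - k + (i : ℕ), by have := i.isLt; omega⟩ j) = Bᴴ * R := by
    ext i j
    have hidx : (⟨m - k + (i : ℕ), by have := i.isLt; omega⟩ : Fin m) = ec (Sum.inr i) := by
      ext; rw [hec2]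
    show X _ j = _
    rw [hidx, hXT, Matrix.mul_apply, Matrix.mul_apply, ← Equiv.sum_comp er,
      Fintype.sum_sum_type]
    have hz : ∀ l : Fin (m - k),
        Hᴴ (ec (Sum.inr i)) (er (Sum.inr l)) * T (er (Sum.inr l)) j = 0 := by
      intro l
      rw [hTbot (er (Sum.inr l)) (by rw [her2]; omega) j, mul_zero]
    simp only [hz, Finset.sum_const_zero, add_zero]
    apply Finset.sum_congr rfl
    intro l _
    rw [Matrix.conjTranspose_apply, Matrix.conjTranspose_apply]
    have hb : B l i = H (er (Sum.inl l)) (ec (Sum.inr i)) := rfl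
    have hr : R l j = T (Fin.castLE hk.le l) j := rfl
    rw [hb, hr, her1]
  -- C is upper triangular
  have hCtri : C.BlockTriangular id := by
    intro i j hij
    show H' (Sum.inr i) (Sum.inl j) = 0
    apply hHess
    rw [her2, hec1]
    have : (j : ℕ) < (i : ℕ) := hij
    omega
  have hdetC : C.det = ∏ i, C i i := Matrix.det_of_upperTriangular hCtri
  -- LHS
  have hLHS : ∏ i : Fin (m - k),
      Norm.norm (H ⟨(i : ℕ) + k, by have := i.isLt; omega⟩
        ⟨(i : ℕ), by have := i.isLt; omega⟩) = Norm.norm C.det := by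
    rw [hdetC, norm_prod]
    apply Finset.prod_congr rfl
    intro i _
    have h1 : (⟨(i : ℕ) + k, by have := i.isLt; omega⟩ : Fin m) = er (Sum.inr i) := by
      apply Fin.ext
      rw [her2]
      simp only [Fin.val_mk]
      omega
    have h2 : (⟨(i : ℕ), by have := i.isLt; omega⟩ : Fin m) = ec (Sum.inl i) := by
      apply Fin.ext
      rw [hec1]
    rw [h1, h2]
    rfl
  -- det R nonzero
  have hRne : Norm.norm R.det ≠ 0 := by
    simpa using hTinv.ne_zero
  -- finish
  rw [hLHS, hXb, hXX, Matrix.det_mul, Matrix.det_mul, Matrix.det_conjTranspose,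
    Matrix.det_conjTranspose]
  rw [norm_mul, norm_mul]
  have habsstar : ∀ z : ℂ, Norm.norm (star z) = Norm.norm z := fun z =>
    Complex.norm_conj z
  rw [habsstar, habsstar]
  have hsq : Norm.norm R.det * Norm.norm R.det = Norm.norm R.det ^ 2 := (sq _).symm
  rw [hsq, Real.sqrt_sq (norm_nonneg _), habsBC]
  field_simp
end

section
/- Let X be an m×k complex matrix of full rank k with k < m, let H be unitary k-upper Hessenberg with H·X = T (T upper triangular as a tall matrix with nonsingular leading k×k block), and let s be the maximal index such that rank(X(s:m, 1:k)) = k. Then the outermost entries of H satisfy h_{i+k,i} ≠ 0 for i = 1, ..., s-1. -/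
open scoped Matrix

noncomputable def solveZ (M : ℕ → ℕ → ℂ) (j0 : ℕ) : ℕ → ℂ
  | r =>
    if hr : r < j0 then
      -(∑ r' ∈ (Finset.Ioc r j0).attach, M r ↑r' * solveZ M j0 ↑r') / M r r
    else if r = j0 then 1 else 0
  termination_by r => j0 - r
  decreasing_by
    have := Finset.mem_Ioc.mp r'.2
    omega

lemma solveZ_gt {M : ℕ → ℕ → ℂ} {j0 r : ℕ} (h : j0 < r) : solveZ M j0 r = 0 := by
  rw [solveZ, dif_neg (by omega), if_neg (by omega)]

lemma solveZ_self {M : ℕ → ℕ → ℂ} {j0 : ℕ} : solveZ M j0 j0 = 1 := by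
  rw [solveZ, dif_neg (by omega), if_pos rfl]

lemma solveZ_spec {M : ℕ → ℕ → ℂ} {j0 r : ℕ} (h : r < j0) (hM : M r r ≠ 0) :
    M r r * solveZ M j0 r + ∑ r' ∈ Finset.Ioc r j0, M r r' * solveZ M j0 r' = 0 := by
  conv_lhs => rw [solveZ]
  rw [dif_pos h, ← Finset.sum_attach (Finset.Ioc r j0) (fun n => M r n * solveZ M j0 n)]
  field_simp
  ring

set_option maxHeartbeats 1000000 in
theorem stmt_5 {m k : ℕ} (hk : k < m) (X : Matrix (Fin m) (Fin k) ℂ) (hX : X.rank = k)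
    (H : Matrix (Fin m) (Fin m) ℂ) (hH : H ∈ Matrix.unitaryGroup (Fin m) ℂ)
    (hHess : ∀ i j : Fin m, (j : ℕ) + k < (i : ℕ) → H i j = 0)
    (T : Matrix (Fin m) (Fin k) ℂ) (hT : H * X = T)
    (hTtri : ∀ i j : Fin k, (j : ℕ) < (i : ℕ) → T (Fin.castLE hk.le i) j = 0)
    (hTbot : ∀ i : Fin m, k ≤ (i : ℕ) → ∀ j, T i j = 0)
    (hTinv : IsUnit (Matrix.det (Matrix.of fun i j : Fin k => T (Fin.castLE hk.le i) j)))
    (s : ℕ) (hs1 : 1 ≤ s) (hsm : s ≤ m)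
    (hrank : (Matrix.of fun (i : Fin (m - s + 1)) (j : Fin k) =>
        X ⟨s - 1 + (i : ℕ), by have := i.isLt; omega⟩ j).rank = k)
    (hmax : ∀ (t : ℕ) (ht1 : s < t) (ht2 : t ≤ m),
      (Matrix.of fun (i : Fin (m - t + 1)) (j : Fin k) =>
        X ⟨t - 1 + (i : ℕ), by have := i.isLt; omega⟩ j).rank ≠ k) :
    ∀ i j : Fin m, (i : ℕ) = (j : ℕ) + k → (j : ℕ) + 1 < s → H i j ≠ 0 := by
  classical
  intro i j hij hjs hzero
  have hjm : (j : ℕ) < m := j.isLt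
  have hkjm : k + (j : ℕ) < m := by have := i.isLt; omega
  -- the "outermost diagonal" entries, as a function on ℕ
  set M : ℕ → ℕ → ℂ := fun a b =>
    if h : k + a < m ∧ b < m then H ⟨k + a, h.1⟩ ⟨b, h.2⟩ else 0 with hMdef
  have hMjj : M ↑j ↑j = 0 := by
    rw [hMdef]
    simp only
    rw [dif_pos ⟨hkjm, hjm⟩]
    have : (⟨k + ↑j, hkjm⟩ : Fin m) = i := Fin.ext (by simp only [Fin.val_mk]; omega)
    rw [this]
    have : (⟨(j : ℕ), hjm⟩ : Fin m) = j := Fin.ext rfl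
    rw [this, hzero]
  have hP : ∃ n, n ≤ (j : ℕ) ∧ M n n = 0 := ⟨↑j, le_refl _, hMjj⟩
  set j0 := Nat.find hP with hj0def
  obtain ⟨hj0j, hMj0⟩ := Nat.find_spec hP
  have hj0min : ∀ a, a < j0 → M a a ≠ 0 := by
    intro a ha
    have := Nat.find_min hP ha
    intro hMa
    exact this ⟨le_trans (le_of_lt (lt_of_lt_of_le ha hj0j)) le_rfl, hMa⟩
  have hj0m : j0 < m := lt_of_le_of_lt hj0j hjm
  -- the vector z
  set z : Fin m → ℂ := fun r => solveZ M j0 ↑r with hzdef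
  -- H *ᵥ z is supported on the first k coordinates
  have hw : ∀ p : Fin m, k ≤ (p : ℕ) → (H *ᵥ z) p = 0 := by
    intro p hp
    have hpa : (p : ℕ) = k + ((p : ℕ) - k) := by omega
    set a := (p : ℕ) - k with hadef
    have hHM : ∀ r : Fin m, H p r = M a ↑r := by
      intro r
      rw [hMdef]
      simp only
      rw [dif_pos ⟨by omega, r.isLt⟩]
      congr 1 <;> exact Fin.ext (by simp; omega)
    have hsum : (H *ᵥ z) p = ∑ n ∈ Finset.range m, M a n * solveZ M j0 n := by
      rw [Matrix.mulVec, dotProduct]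
      rw [show (∑ r : Fin m, H p r * z r) = ∑ r : Fin m, M a ↑r * solveZ M j0 ↑r from
        Finset.sum_congr rfl (fun r _ => by rw [hHM r, hzdef])]
      exact Fin.sum_univ_eq_sum_range (fun n => M a n * solveZ M j0 n) m
    rw [hsum]
    by_cases hcase : j0 < a
    · apply Finset.sum_eq_zero
      intro n hn
      rcases le_or_gt n j0 with h1 | h1
      · have hz0 : M a n = 0 := by
          rw [hMdef]
          simp only
          rw [dif_pos ⟨by omega, Finset.mem_range.mp hn⟩]
          exact hHess _ _ (by simp; omega)
        rw [hz0, zero_mul]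
      · rw [solveZ_gt h1, mul_zero]
    · push_neg at hcase
      have hsub : Finset.Icc a j0 ⊆ Finset.range m := by
        intro n hn
        have := Finset.mem_Icc.mp hn
        exact Finset.mem_range.mpr (by omega)
      rw [← Finset.sum_subset hsub]
      · rw [← Finset.Ioc_insert_left hcase,
          Finset.sum_insert (by simp)]
        rcases eq_or_lt_of_le hcase with heq | hlt
        · rw [heq, hMj0, zero_mul, zero_add]
          apply Finset.sum_eq_zero
          intro n hn
          rw [solveZ_gt (Finset.mem_Ioc.mp hn).1, mul_zero]
        · exact solveZ_spec hlt (hj0min a hlt)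
      · intro n hn hn2
        rw [Finset.mem_range] at hn
        rw [Finset.mem_Icc] at hn2
        push_neg at hn2
        rcases lt_or_ge n a with h1 | h1
        · have hz0 : M a n = 0 := by
            rw [hMdef]
            simp only
            rw [dif_pos ⟨by omega, hn⟩]
            exact hHess _ _ (by simp; omega)
          rw [hz0, zero_mul]
        · rw [solveZ_gt (hn2 h1), mul_zero]
  -- the square invertible block of T
  set A : Matrix (Fin k) (Fin k) ℂ := Matrix.of fun i j : Fin k => T (Fin.castLE hk.le i) j
    with hAdef
  set c : Fin k → ℂ := A⁻¹ *ᵥ (fun q : Fin k => (H *ᵥ z) (Fin.castLE hk.le q)) with hcdef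
  have hAc : A *ᵥ c = fun q : Fin k => (H *ᵥ z) (Fin.castLE hk.le q) := by
    rw [hcdef, Matrix.mulVec_mulVec, Matrix.mul_nonsing_inv A hTinv, Matrix.one_mulVec]
  have hTc : T *ᵥ c = H *ᵥ z := by
    funext p
    by_cases hpk : (p : ℕ) < k
    · have hcast : Fin.castLE hk.le (⟨(p : ℕ), hpk⟩ : Fin k) = p := Fin.ext rfl
      have : (T *ᵥ c) p = (A *ᵥ c) ⟨(p : ℕ), hpk⟩ := by
        rw [Matrix.mulVec, Matrix.mulVec, dotProduct, dotProduct]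
        apply Finset.sum_congr rfl
        intro q _
        rw [hAdef]
        simp only [Matrix.of_apply]
        rw [hcast]
      rw [this, hAc]
      simp only
      rw [hcast]
    · push_neg at hpk
      rw [hw p hpk]
      rw [Matrix.mulVec, dotProduct]
      apply Finset.sum_eq_zero
      intro q _
      rw [hTbot p hpk q, zero_mul]
  have hstar : star H * H = 1 := hH.1
  have hXc : X *ᵥ c = z := by
    have h1 : H *ᵥ (X *ᵥ c) = H *ᵥ z := by
      rw [Matrix.mulVec_mulVec, hT, hTc]
    have h2 := congrArg (fun v => star H *ᵥ v) h1
    simp only [Matrix.mulVec_mulVec, ← Matrix.mul_assoc, hstar, Matrix.one_mul,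
      Matrix.one_mulVec] at h2
    exact h2
  have hzj0 : z ⟨j0, hj0m⟩ = 1 := by
    rw [hzdef]; exact solveZ_self
  have hc0 : c ≠ 0 := by
    intro h
    rw [h, Matrix.mulVec_zero] at hXc
    have := congrFun hXc ⟨j0, hj0m⟩
    rw [hzj0] at this
    exact one_ne_zero this.symm
  -- contradiction with full rank of the trailing block
  set B : Matrix (Fin (m - s + 1)) (Fin k) ℂ := Matrix.of fun (i : Fin (m - s + 1)) (q : Fin k) =>
    X ⟨s - 1 + (i : ℕ), by have := i.isLt; omega⟩ q with hBdef
  have hrank' : B.rank = k := hrank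
  have hBc : B *ᵥ c = 0 := by
    funext i0
    have hrow : (B *ᵥ c) i0 = (X *ᵥ c) ⟨s - 1 + (i0 : ℕ), by have := i0.isLt; omega⟩ := rfl
    rw [hrow, hXc, hzdef]
    exact solveZ_gt (show j0 < s - 1 + (i0 : ℕ) by omega)
  have hker : LinearMap.ker B.mulVecLin = ⊥ := by
    have h1 := LinearMap.finrank_range_add_finrank_ker B.mulVecLin
    have h2 : Module.finrank ℂ (LinearMap.range B.mulVecLin) = k := hrank'
    have h3 : Module.finrank ℂ (Fin k → ℂ) = k := by simp
    rw [h2, h3] at h1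
    have h4 : Module.finrank ℂ (LinearMap.ker B.mulVecLin) = 0 := by omega
    exact Submodule.finrank_eq_zero.mp h4
  have hcmem : c ∈ LinearMap.ker B.mulVecLin := by
    rw [LinearMap.mem_ker, Matrix.mulVecLin_apply, hBc]
  rw [hker, Submodule.mem_bot] at hcmem
  exact hc0 hcmem
end

section
/- With Û = [[U − U·Ỹ·Ỹᴴ, U·Ỹ],[Ỹᴴ, 0_k]] where Ỹ ∈ ℂ^{n×k} has orthonormal columns (ỸᴴỸ = I_k) and U is n×n unitary, the (n+k)×(n+k) matrix Û is unitary. -/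
open scoped Matrix

theorem stmt_7 {n k : ℕ} (U : Matrix (Fin n) (Fin n) ℂ)
    (hU : U ∈ Matrix.unitaryGroup (Fin n) ℂ)
    (Y : Matrix (Fin n) (Fin k) ℂ) (hY : Yᴴ * Y = 1) :
    Matrix.fromBlocks (U - U * Y * Yᴴ) (U * Y) Yᴴ 0 ∈
      Matrix.unitaryGroup (Fin n ⊕ Fin k) ℂ := by
  have hU1 : U * Uᴴ = 1 := Matrix.mem_unitaryGroup_iff.mp hU
  have hY' : ∀ (Z : Matrix (Fin k) (Fin n) ℂ), Yᴴ * (Y * Z) = Z := fun Z => by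
    rw [← Matrix.mul_assoc, hY, Matrix.one_mul]
  have hU1' : ∀ (Z : Matrix (Fin n) (Fin n) ℂ), U * (Uᴴ * Z) = Z := fun Z => by
    rw [← Matrix.mul_assoc, hU1, Matrix.one_mul]
  rw [Matrix.mem_unitaryGroup_iff]
  show _ * (Matrix.fromBlocks _ _ _ _)ᴴ = 1
  rw [Matrix.fromBlocks_conjTranspose, Matrix.fromBlocks_multiply, ← Matrix.fromBlocks_one]
  refine Matrix.fromBlocks_inj.mpr ⟨?_, ?_, ?_, ?_⟩
  · simp only [Matrix.conjTranspose_sub, Matrix.conjTranspose_mul,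
      Matrix.conjTranspose_conjTranspose, Matrix.sub_mul, Matrix.mul_sub, Matrix.mul_assoc,
      hY', hU1, hU1']
    abel
  · simp only [Matrix.conjTranspose_conjTranspose, Matrix.conjTranspose_zero,
      Matrix.mul_zero, add_zero, Matrix.sub_mul, Matrix.mul_assoc, hY, Matrix.mul_one,
      sub_self]
  · simp only [Matrix.conjTranspose_sub, Matrix.conjTranspose_mul,
      Matrix.conjTranspose_conjTranspose, Matrix.zero_mul, add_zero, Matrix.mul_sub,
      Matrix.mul_assoc, hY', sub_self]
  · simp [hY]
end

section
/- Let L be a proper unitary k-lower Hessenberg matrix of size N = n+k, and let Q be a unitary upper Hessenberg matrix of the form diag(I_k, Q̂). Then the unitary matrix C = L·Q satisfies rank(C(h:N, 1:h+k-2)) ≤ k for all h = 2, ..., n+1. -/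
open scoped Matrix

theorem stmt_9 {n k : ℕ} (hk : 1 ≤ k)
    (L Q : Matrix (Fin (n + k)) (Fin (n + k)) ℂ)
    (hL : L ∈ Matrix.unitaryGroup (Fin (n + k)) ℂ)
    (hLhess : ∀ i j : Fin (n + k), (i : ℕ) + k < (j : ℕ) → L i j = 0)
    (hLprop : ∀ i j : Fin (n + k), (j : ℕ) = (i : ℕ) + k → L i j ≠ 0)
    (hQ : Q ∈ Matrix.unitaryGroup (Fin (n + k)) ℂ)
    (hQhess : ∀ i j : Fin (n + k), (j : ℕ) + 1 < (i : ℕ) → Q i j = 0)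
    (hQblock : ∀ i j : Fin (n + k), ((i : ℕ) < k ∨ (j : ℕ) < k) → Q i j = if i = j then 1 else 0) :
    ∀ (hh : ℕ) (hh2 : 2 ≤ hh) (hhn : hh ≤ n + 1),
      (Matrix.of fun (i : Fin (n + k - hh + 1)) (j : Fin (hh + k - 2)) =>
        (L * Q) ⟨hh - 1 + (i : ℕ), by have := i.isLt; omega⟩
          ⟨(j : ℕ), by have := j.isLt; omega⟩).rank ≤ k := by
  intro hh hh2 hhn
  have hLL : L * Lᴴ = 1 := Matrix.mem_unitaryGroup_iff.mp hL
  -- the blocks of L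
  set P : Matrix (Fin (hh - 1)) (Fin (hh + k - 1)) ℂ :=
    Matrix.of (fun i j => L ⟨i, by have := i.isLt; omega⟩ ⟨j, by have := j.isLt; omega⟩) with hPdef
  set B : Matrix (Fin (n + k - hh + 1)) (Fin (hh + k - 1)) ℂ :=
    Matrix.of (fun i j =>
      L ⟨hh - 1 + (i : ℕ), by have := i.isLt; omega⟩ ⟨j, by have := j.isLt; omega⟩) with hBdef
  set Q' : Matrix (Fin (hh + k - 1)) (Fin (hh + k - 2)) ℂ :=
    Matrix.of (fun i j =>
      Q ⟨i, by have := i.isLt; omega⟩ ⟨j, by have := j.isLt; omega⟩) with hQdef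
  -- truncation of inner products of rows of L
  have trunc : ∀ (r b' : Fin (n + k)), (b' : ℕ) < hh - 1 →
      (L * Lᴴ) r b' = ∑ j : Fin (hh + k - 1),
        L r ⟨j, by have := j.isLt; omega⟩ * star (L b' ⟨j, by have := j.isLt; omega⟩) := by
    intro r b' hb'
    rw [Matrix.mul_apply]
    have hterm : ∀ j : Fin (n + k), L r j * Lᴴ j b' =
        (fun m : ℕ => if h : m < n + k then L r ⟨m, h⟩ * star (L b' ⟨m, h⟩) else 0) (j : ℕ) := by
      intro j
      simp [Matrix.conjTranspose_apply, j.isLt]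
    calc (∑ j : Fin (n + k), L r j * Lᴴ j b')
        = ∑ j : Fin (n + k),
            (fun m : ℕ => if h : m < n + k then L r ⟨m, h⟩ * star (L b' ⟨m, h⟩) else 0) (j : ℕ) :=
          Finset.sum_congr rfl (fun j _ => hterm j)
      _ = ∑ m ∈ Finset.range (n + k),
            (fun m : ℕ => if h : m < n + k then L r ⟨m, h⟩ * star (L b' ⟨m, h⟩) else 0) m :=
          Fin.sum_univ_eq_sum_range
            (fun m : ℕ => if h : m < n + k then L r ⟨m, h⟩ * star (L b' ⟨m, h⟩) else 0) (n + k)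
      _ = ∑ m ∈ Finset.range (hh + k - 1),
            (fun m : ℕ => if h : m < n + k then L r ⟨m, h⟩ * star (L b' ⟨m, h⟩) else 0) m := by
          refine (Finset.sum_subset (by
            intro x hx
            simp only [Finset.mem_range] at *
            omega) ?_).symm
          intro x hx hx'
          simp only [Finset.mem_range] at hx hx'
          have hz : L b' ⟨x, hx⟩ = 0 := hLhess _ _ (by simp; omega)
          simp [hx, hz]
      _ = ∑ j : Fin (hh + k - 1),
            L r ⟨j, by have := j.isLt; omega⟩ * star (L b' ⟨j, by have := j.isLt; omega⟩) := by
          rw [← Fin.sum_univ_eq_sum_range]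
          refine Finset.sum_congr rfl (fun j _ => ?_)
          have hj : (j : ℕ) < n + k := by have := j.isLt; omega
          simp [hj]
  -- P Pᴴ = 1
  have hPP : P * Pᴴ = 1 := by
    ext a b
    have ha : (a : ℕ) < n + k := by have := a.isLt; omega
    have hb : (b : ℕ) < n + k := by have := b.isLt; omega
    have := (trunc ⟨a, ha⟩ ⟨b, hb⟩ (by simpa using b.isLt)).symm
    rw [Matrix.mul_apply]
    simp only [hPdef, Matrix.of_apply, Matrix.conjTranspose_apply]
    rw [this, hLL]
    by_cases hab : a = b
    · subst hab; simp [Matrix.one_apply]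
    · have : (⟨(a : ℕ), ha⟩ : Fin (n + k)) ≠ ⟨b, hb⟩ := by
        simp [Fin.ext_iff]; exact fun h => hab (Fin.ext h)
      simp [Matrix.one_apply, this, hab]
  -- B Pᴴ = 0
  have hBP : B * Pᴴ = 0 := by
    ext a b
    have ha : hh - 1 + (a : ℕ) < n + k := by have := a.isLt; omega
    have hb : (b : ℕ) < n + k := by have := b.isLt; omega
    have := (trunc ⟨hh - 1 + (a : ℕ), ha⟩ ⟨b, hb⟩ (by simpa using b.isLt)).symm
    rw [Matrix.mul_apply]
    simp only [hBdef, hPdef, Matrix.of_apply, Matrix.conjTranspose_apply]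
    rw [this, hLL]
    have hne : (⟨hh - 1 + (a : ℕ), ha⟩ : Fin (n + k)) ≠ ⟨b, hb⟩ := by
      have := b.isLt
      simp only [ne_eq, Fin.mk.injEq]
      omega
    simp [Matrix.one_apply, hne]
  -- rank Pᴴ ≥ hh - 1
  have hrankP : hh - 1 ≤ Pᴴ.rank := by
    have h1 : (P * Pᴴ).rank ≤ Pᴴ.rank := Matrix.rank_mul_le_right _ _
    rw [hPP] at h1
    simpa using h1
  -- rank B ≤ k
  have hrankB : B.rank ≤ k := by
    have hker : LinearMap.range Pᴴ.mulVecLin ≤ LinearMap.ker B.mulVecLin := by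
      rintro x ⟨y, rfl⟩
      simp only [LinearMap.mem_ker, Matrix.mulVecLin_apply, Matrix.mulVec_mulVec, hBP,
        Matrix.zero_mulVec]
    have h2 : Pᴴ.rank ≤ Module.finrank ℂ (LinearMap.ker B.mulVecLin) :=
      Submodule.finrank_mono hker
    have h3 := LinearMap.finrank_range_add_finrank_ker B.mulVecLin
    have h4 : Module.finrank ℂ (Fin (hh + k - 1) → ℂ) = hh + k - 1 := by
      simp
    rw [h4] at h3
    have h5 : B.rank = Module.finrank ℂ (LinearMap.range B.mulVecLin) := rfl
    omega
  -- the target matrix equals B * Q'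
  have hCeq : (Matrix.of fun (i : Fin (n + k - hh + 1)) (j : Fin (hh + k - 2)) =>
        (L * Q) ⟨hh - 1 + (i : ℕ), by have := i.isLt; omega⟩
          ⟨(j : ℕ), by have := j.isLt; omega⟩) = B * Q' := by
    ext i j
    have hi : hh - 1 + (i : ℕ) < n + k := by have := i.isLt; omega
    have hj : (j : ℕ) < n + k := by have := j.isLt; omega
    rw [Matrix.of_apply, Matrix.mul_apply, Matrix.mul_apply]
    have hterm : ∀ m : Fin (n + k),
        L ⟨hh - 1 + (i : ℕ), hi⟩ m * Q m ⟨(j : ℕ), hj⟩ =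
        (fun x : ℕ => if h : x < n + k then
          L ⟨hh - 1 + (i : ℕ), hi⟩ ⟨x, h⟩ * Q ⟨x, h⟩ ⟨(j : ℕ), hj⟩ else 0) (m : ℕ) := by
      intro m; simp [m.isLt]
    calc (∑ m : Fin (n + k), L ⟨hh - 1 + (i : ℕ), hi⟩ m * Q m ⟨(j : ℕ), hj⟩)
        = ∑ m : Fin (n + k), (fun x : ℕ => if h : x < n + k then
            L ⟨hh - 1 + (i : ℕ), hi⟩ ⟨x, h⟩ * Q ⟨x, h⟩ ⟨(j : ℕ), hj⟩ else 0) (m : ℕ) :=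
          Finset.sum_congr rfl (fun m _ => hterm m)
      _ = ∑ m ∈ Finset.range (n + k), (fun x : ℕ => if h : x < n + k then
            L ⟨hh - 1 + (i : ℕ), hi⟩ ⟨x, h⟩ * Q ⟨x, h⟩ ⟨(j : ℕ), hj⟩ else 0) m :=
          Fin.sum_univ_eq_sum_range (fun x : ℕ => if h : x < n + k then
            L ⟨hh - 1 + (i : ℕ), hi⟩ ⟨x, h⟩ * Q ⟨x, h⟩ ⟨(j : ℕ), hj⟩ else 0) (n + k)
      _ = ∑ m ∈ Finset.range (hh + k - 1), (fun x : ℕ => if h : x < n + k then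
            L ⟨hh - 1 + (i : ℕ), hi⟩ ⟨x, h⟩ * Q ⟨x, h⟩ ⟨(j : ℕ), hj⟩ else 0) m := by
          refine (Finset.sum_subset (by
            intro x hx
            simp only [Finset.mem_range] at *
            omega) ?_).symm
          intro x hx hx'
          simp only [Finset.mem_range] at hx hx'
          have hz : Q ⟨x, hx⟩ ⟨(j : ℕ), hj⟩ = 0 := by
            refine hQhess _ _ ?_
            have := j.isLt
            simp only []
            omega
          simp [hx, hz]
      _ = ∑ m : Fin (hh + k - 1), B i m * Q' m j := by
          rw [← Fin.sum_univ_eq_sum_range]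
          refine Finset.sum_congr rfl (fun m _ => ?_)
          have hm : (m : ℕ) < n + k := by have := m.isLt; omega
          simp [hm, hBdef, hQdef]
  rw [hCeq]
  exact le_trans (Matrix.rank_mul_le_left _ _) hrankB
end

section
/- Let L ∈ ℂ^{N×N} be a proper unitary k-lower Hessenberg matrix, R ∈ ℂ^{N×N} a unitary k-upper Hessenberg matrix, Q = diag(I_k, Q̂) unitary with Q̂ upper Hessenberg of size n = N−k, T_k a k×k nonsingular upper triangular matrix, T = [T_kᴴ; 0]ᵀ-style N×k matrix with top block T_k, and set Zᴴ = L(n+1:N, :)·Q and F = Q + T·Zᴴ. Then Â = L·F·R is upper Hessenberg with Â(n+1:N, :) = 0, i.e., Â = [[A, *],[0, 0]] for some upper Hessenberg A of size n. -/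
open scoped Matrix
open Finset

private lemma fin_sum_split {n k : ℕ} (f : Fin (n + k) → ℂ) :
    ∑ c, f c = (∑ l : Fin k, f (Fin.castLE (Nat.le_add_left k n) l)) +
      ∑ q : Fin n, f ⟨k + (q : ℕ), by have := q.isLt; omega⟩ := by
  rw [← Equiv.sum_comp (finSumFinEquiv.trans (finCongr (Nat.add_comm k n))) f,
    Fintype.sum_sum_type]
  congr 1
  all_goals
    refine Finset.sum_congr rfl fun x _ => congrArg f (Fin.ext ?_)
    simp

theorem stmt_10 {n k : ℕ}
    (L R Q : Matrix (Fin (n + k)) (Fin (n + k)) ℂ)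
    (hL : L ∈ Matrix.unitaryGroup (Fin (n + k)) ℂ)
    (hLhess : ∀ i j : Fin (n + k), (i : ℕ) + k < (j : ℕ) → L i j = 0)
    (hLprop : ∀ i j : Fin (n + k), (j : ℕ) = (i : ℕ) + k → L i j ≠ 0)
    (hR : R ∈ Matrix.unitaryGroup (Fin (n + k)) ℂ)
    (hRhess : ∀ i j : Fin (n + k), (j : ℕ) + k < (i : ℕ) → R i j = 0)
    (hQ : Q ∈ Matrix.unitaryGroup (Fin (n + k)) ℂ)
    (hQhess : ∀ i j : Fin (n + k), (j : ℕ) + 1 < (i : ℕ) → Q i j = 0)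
    (hQblock : ∀ i j : Fin (n + k), ((i : ℕ) < k ∨ (j : ℕ) < k) → Q i j = if i = j then 1 else 0)
    (Tk : Matrix (Fin k) (Fin k) ℂ)
    (hTkTri : ∀ i j : Fin k, (j : ℕ) < (i : ℕ) → Tk i j = 0)
    (hTkUnit : IsUnit Tk.det)
    (T : Matrix (Fin (n + k)) (Fin k) ℂ)
    (hTtop : ∀ i j : Fin k, T (Fin.castLE (Nat.le_add_left k n) i) j = Tk i j)
    (hTbot : ∀ i : Fin (n + k), k ≤ (i : ℕ) → ∀ j, T i j = 0)
    (hLbot : ∀ i j : Fin k, L ⟨n + (i : ℕ), by have := i.isLt; omega⟩ (Fin.castLE (Nat.le_add_left k n) j) = (-Tk⁻¹) i j) :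
    ∀ Ahat : Matrix (Fin (n + k)) (Fin (n + k)) ℂ,
      Ahat = L * (Q + T * ((Matrix.of fun (i : Fin k) (j : Fin (n + k)) => L ⟨n + (i : ℕ), by have := i.isLt; omega⟩ j) * Q)) * R →
      (∀ i j : Fin (n + k), (j : ℕ) + 1 < (i : ℕ) → Ahat i j = 0) ∧
      (∀ i : Fin (n + k), n ≤ (i : ℕ) → ∀ j, Ahat i j = 0) := by
  intro Ahat hA
  subst hA
  classical
  -- index embeddings
  set bot : Fin k → Fin (n + k) := fun s => ⟨n + (s : ℕ), by have := s.isLt; omega⟩ with hbot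
  set top : Fin n → Fin (n + k) := fun p => ⟨(p : ℕ), by have := p.isLt; omega⟩ with htop
  set col : Fin n → Fin (n + k) := fun q => ⟨k + (q : ℕ), by have := q.isLt; omega⟩ with hcol
  -- selectors
  set E : Matrix (Fin (n + k)) (Fin k) ℂ :=
    Matrix.of (fun c a => if c = Fin.castLE (Nat.le_add_left k n) a then 1 else 0) with hEdef
  set P : Matrix (Fin k) (Fin (n + k)) ℂ :=
    Matrix.of (fun s c => if c = bot s then 1 else 0) with hPdef
  set M : Matrix (Fin (n + k)) (Fin (n + k)) ℂ := L + L * E * Tk * (P * L) with hMdef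
  have hU : L * star L = 1 := Matrix.mem_unitaryGroup_iff.mp hL
  have hTk1 : Tk * Tk⁻¹ = 1 := Matrix.mul_nonsing_inv Tk hTkUnit
  have hTk2 : Tk⁻¹ * Tk = 1 := Matrix.nonsing_inv_mul Tk hTkUnit
  -- selector entry lemmas
  have hAE : ∀ (A : Matrix (Fin (n + k)) (Fin (n + k)) ℂ) (i : Fin (n + k)) (a : Fin k),
      (A * E) i a = A i (Fin.castLE (Nat.le_add_left k n) a) := by
    intro A i a
    simp [hEdef, Matrix.mul_apply]
  have hAE' : ∀ (A : Matrix (Fin k) (Fin (n + k)) ℂ) (s : Fin k) (a : Fin k),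
      (A * E) s a = A s (Fin.castLE (Nat.le_add_left k n) a) := by
    intro A s a
    simp [hEdef, Matrix.mul_apply]
  have hPA : ∀ (A : Matrix (Fin (n + k)) (Fin (n + k)) ℂ) (s : Fin k) (j : Fin (n + k)),
      (P * A) s j = A (bot s) j := by
    intro A s j
    simp [hPdef, Matrix.mul_apply]
  -- P * L * E = -Tk⁻¹
  have hPLE : P * L * E = -Tk⁻¹ := by
    ext s a
    rw [hAE' (P * L) s a, hPA L s _]
    exact hLbot s a
  -- T = E * Tk
  have hT : T = E * Tk := by
    ext c s
    by_cases hc : (c : ℕ) < k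
    · have hce : c = Fin.castLE (Nat.le_add_left k n) ⟨(c : ℕ), hc⟩ := Fin.ext rfl
      have hiff : ∀ x : Fin k, (c = Fin.castLE (Nat.le_add_left k n) x) ↔ ((⟨(c : ℕ), hc⟩ : Fin k) = x) := by
        intro x
        rw [Fin.ext_iff, Fin.ext_iff]
        simp
      rw [hce, hTtop]
      symm
      calc (E * Tk) c s = ∑ x, if (⟨(c : ℕ), hc⟩ : Fin k) = x then Tk x s else 0 := by
            rw [Matrix.mul_apply]
            refine Finset.sum_congr rfl fun x _ => ?_
            rw [hEdef]
            simp only [Matrix.of_apply, hiff x, ite_mul, one_mul, zero_mul]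
        _ = Tk ⟨(c : ℕ), hc⟩ s := by rw [Finset.sum_ite_eq]; simp
    · rw [hTbot c (le_of_not_gt hc) s, Matrix.mul_apply]
      symm
      apply Finset.sum_eq_zero
      intro a _
      have hne : c ≠ Fin.castLE (Nat.le_add_left k n) a := by
        intro h
        apply hc
        rw [h]
        simpa using a.isLt
      simp [hEdef, hne]
  -- M * E = 0
  have hMEzero : M * E = 0 := by
    rw [hMdef, Matrix.add_mul, Matrix.mul_assoc (L * E * Tk) (P * L) E, hPLE,
      Matrix.mul_assoc (L * E) Tk (-Tk⁻¹)]
    rw [Matrix.mul_neg, hTk1]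
    simp
  -- P * M = 0
  have hPM : P * M = 0 := by
    rw [hMdef, Matrix.mul_add, ← Matrix.mul_assoc P (L * E * Tk) (P * L),
      ← Matrix.mul_assoc P (L * E) Tk, ← Matrix.mul_assoc P L E, hPLE]
    rw [Matrix.neg_mul, hTk2]
    simp
  -- M * Lᴴ = 1 + L * E * Tk * P
  have hMLH : M * star L = 1 + L * E * Tk * P := by
    rw [hMdef, Matrix.add_mul, hU, Matrix.mul_assoc (L * E * Tk) (P * L) (star L),
      Matrix.mul_assoc P L (star L), hU, Matrix.mul_one]
  -- the small matrices
  set B : Matrix (Fin n) (Fin n) ℂ := Matrix.of (fun p q => M (top p) (col q)) with hBdef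
  set C : Matrix (Fin n) (Fin n) ℂ := Matrix.of (fun p q => star (L (top q) (col p))) with hCdef
  have hBC : B * C = 1 := by
    ext p r
    rw [Matrix.mul_apply]
    have hfull : ∑ c, M (top p) c * star (L (top r) c) = (1 : Matrix (Fin n) (Fin n) ℂ) p r := by
      have h1 := congrFun (congrFun hMLH (top p)) (top r)
      rw [Matrix.mul_apply] at h1
      simp only [Matrix.star_apply] at h1
      rw [h1, Matrix.add_apply]
      have h2 : (L * E * Tk * P) (top p) (top r) = 0 := by
        rw [Matrix.mul_apply]
        apply Finset.sum_eq_zero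
        intro s _
        have hne : top r ≠ bot s := by
          intro h
          have := congrArg Fin.val h
          simp [htop, hbot] at this
          omega
        simp [hPdef, hne]
      rw [h2, add_zero, Matrix.one_apply, Matrix.one_apply]
      have : top p = top r ↔ p = r := by
        constructor
        · intro h
          have h2 := congrArg Fin.val h
          simp only [htop] at h2
          exact Fin.ext h2
        · intro h; rw [h]
      simp [this]
    have hsplit := fin_sum_split (fun c => M (top p) c * star (L (top r) c))
    have hzero : ∀ l : Fin k,
        M (top p) (Fin.castLE (Nat.le_add_left k n) l) * star (L (top r) (Fin.castLE (Nat.le_add_left k n) l)) = 0 := by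
      intro l
      have : M (top p) (Fin.castLE (Nat.le_add_left k n) l) = 0 := by
        have := congrFun (congrFun hMEzero (top p)) l
        rw [hAE M (top p) l] at this
        simpa using this
      rw [this, zero_mul]
    rw [Finset.sum_eq_zero (fun l _ => hzero l), zero_add] at hsplit
    rw [← hfull, hsplit]
    apply Finset.sum_congr rfl
    intro q _
    rfl
  have hCt : C.BlockTriangular id := by
    intro p q hpq
    simp only [hCdef, Matrix.of_apply]
    have hpq' : (q : ℕ) < (p : ℕ) := hpq
    rw [hLhess (top q) (col p) (by simp only [htop, hcol]; omega)]
    simp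
  haveI : Invertible C := invertibleOfLeftInverse _ _ hBC
  have hCB : C⁻¹ = B := Matrix.inv_eq_left_inv hBC
  have hBt : B.BlockTriangular id := by
    rw [← hCB]
    exact Matrix.blockTriangular_inv_of_blockTriangular hCt
  -- key zero-pattern lemma
  have klemma : ∀ i a : Fin (n + k), (a : ℕ) < (i : ℕ) + k → M i a = 0 := by
    intro i a ha
    by_cases hak : (a : ℕ) < k
    · have hae : a = Fin.castLE (Nat.le_add_left k n) ⟨(a : ℕ), hak⟩ := Fin.ext rfl
      rw [hae]
      have := congrFun (congrFun hMEzero i) ⟨(a : ℕ), hak⟩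
      rw [hAE M i _] at this
      simpa using this
    · by_cases hin : (i : ℕ) < n
      · -- the hard case via B
        have hqn : (a : ℕ) - k < n := by omega
        have h1 : i = top ⟨(i : ℕ), hin⟩ := Fin.ext rfl
        have h2 : a = col ⟨(a : ℕ) - k, hqn⟩ := Fin.ext (by simp only [hcol]; omega)
        have h3 : B ⟨(i : ℕ), hin⟩ ⟨(a : ℕ) - k, hqn⟩ = 0 := by
          refine hBt ?_
          show ((⟨(a : ℕ) - k, hqn⟩ : Fin n) : Fin n) < ⟨(i : ℕ), hin⟩
          rw [Fin.mk_lt_mk]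
          omega
        rw [h1, h2]
        exact h3
      · -- bottom rows
        have hsn : (i : ℕ) - n < k := by have := i.isLt; omega
        have h1 : i = bot ⟨(i : ℕ) - n, hsn⟩ := Fin.ext (by simp [hbot]; omega)
        have := congrFun (congrFun hPM ⟨(i : ℕ) - n, hsn⟩) a
        rw [hPA M _ a] at this
        rw [h1]
        simpa using this
  -- relate the statement's matrix to M
  have hX : (Matrix.of fun (i : Fin k) (j : Fin (n + k)) =>
      L ⟨n + (i : ℕ), by have := i.isLt; omega⟩ j) = P * L := by
    ext s j
    rw [hPA L s j]
    rfl
  have hfact : L * (Q + T * ((Matrix.of fun (i : Fin k) (j : Fin (n + k)) =>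
      L ⟨n + (i : ℕ), by have := i.isLt; omega⟩ j) * Q)) * R = M * Q * R := by
    rw [hX, hT, hMdef]
    simp only [Matrix.mul_add, Matrix.add_mul, Matrix.mul_assoc]
  rw [hfact]
  have key : ∀ i j : Fin (n + k), ((j : ℕ) + 1 < (i : ℕ) ∨ n ≤ (i : ℕ)) →
      (M * Q * R) i j = 0 := by
    intro i j hij
    rw [Matrix.mul_apply]
    apply Finset.sum_eq_zero
    intro b _
    by_cases hb : (j : ℕ) + k < (b : ℕ)
    · rw [hRhess b j hb, mul_zero]
    · have hMQ : (M * Q) i b = 0 := by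
        rw [Matrix.mul_apply]
        apply Finset.sum_eq_zero
        intro a _
        by_cases haik : (a : ℕ) < (i : ℕ) + k
        · rw [klemma i a haik, zero_mul]
        · rcases hij with h | h
          · rw [hQhess a b (by omega), mul_zero]
          · exfalso
            have := a.isLt
            omega
      rw [hMQ, zero_mul]
  exact ⟨fun i j h => key i j (Or.inl h), fun i h j => key i j (Or.inr h)⟩
end

section
/- Let Â = Û + X̂Ŷᴴ ∈ ℂ^{N×N} be block upper triangular of the form [[A, B],[0, 0]] with A ∈ ℂ^{n×n}, and let p_d be a monic polynomial of degree d. If P is the unitary factor of a QR factorization of p_d(Â), then P can be chosen block diagonal, P = diag(P_1, P_2) with P_1 ∈ ℂ^{n×n} and P_2 ∈ ℂ^{k×k} unitary, and consequently Â^{(1)} = Pᴴ Â P has the block form [[A^{(1)}, B^{(1)}],[0, 0]] where A^{(1)} = P_1ᴴ A P_1. -/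
open scoped Matrix

lemma my_exists_qr {n : ℕ} (M : Matrix (Fin n) (Fin n) ℂ) :
    ∃ Q R : Matrix (Fin n) (Fin n) ℂ, Q ∈ Matrix.unitaryGroup (Fin n) ℂ ∧
      (∀ i j : Fin n, (j : ℕ) < i → R i j = 0) ∧ M = Q * R := by
  have h : Module.finrank ℂ (EuclideanSpace ℂ (Fin n)) = Fintype.card (Fin n) := by simp
  set f : Fin n → EuclideanSpace ℂ (Fin n) := fun j => WithLp.toLp 2 (fun l => M l j) with hf
  haveI inst : WellFoundedLT (Fin n) := inferInstance
  set b : OrthonormalBasis (Fin n) ℂ (EuclideanSpace ℂ (Fin n)) :=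
    InnerProductSpace.gramSchmidtOrthonormalBasis (𝕜 := ℂ) (E := EuclideanSpace ℂ (Fin n)) (ι := Fin n) h f
    with hb
  refine ⟨Matrix.of fun l i => b i l, Matrix.of fun i j => b.repr (f j) i, ?_, ?_, ?_⟩
  · rw [Matrix.mem_unitaryGroup_iff']
    ext i j
    have := b.orthonormal
    rw [orthonormal_iff_ite] at this
    have h2 := this i j
    simp only [PiLp.inner_apply, RCLike.inner_apply] at h2
    simp only [Matrix.mul_apply, Matrix.one_apply, Matrix.star_apply, Matrix.of_apply, star]
    rw [← h2]
    simp only [Matrix.conjTranspose_apply, Matrix.of_apply]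
    exact Finset.sum_congr rfl fun x _ => mul_comm _ _
  · intro i j hij
    exact InnerProductSpace.gramSchmidtOrthonormalBasis_inv_triangular' h f hij
  · ext l j
    have hs := b.sum_repr (f j)
    have h3 : (∑ i, b.repr (f j) i • b i : EuclideanSpace ℂ (Fin n)) l = f j l :=
      by rw [hs]
    simp only [Matrix.mul_apply, Matrix.of_apply]
    rw [show M l j = f j l from rfl, ← h3]
    have h4 : (∑ x, b.repr (f j) x • b x : EuclideanSpace ℂ (Fin n)) l
        = ∑ x, (b.repr (f j) x • b x : EuclideanSpace ℂ (Fin n)) l :=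
      by rw [WithLp.ofLp_sum]; exact Finset.sum_apply l Finset.univ _
    rw [h4]
    simp [mul_comm]

lemma my_aeval_blocks {n k : ℕ} (A : Matrix (Fin n) (Fin n) ℂ) (B : Matrix (Fin n) (Fin k) ℂ)
    (p : Polynomial ℂ) :
    ∃ (C : Matrix (Fin n) (Fin k) ℂ) (c : ℂ),
      Polynomial.aeval (Matrix.fromBlocks A B 0 0) p =
        Matrix.fromBlocks (Polynomial.aeval A p) C 0 (c • (1 : Matrix (Fin k) (Fin k) ℂ)) := by
  induction p using Polynomial.induction_on with
  | C a =>
      refine ⟨0, a, ?_⟩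
      simp [Polynomial.aeval_C, Algebra.algebraMap_eq_smul_one, ← Matrix.fromBlocks_one,
        Matrix.fromBlocks_smul]
  | add p q hp hq =>
      obtain ⟨C₁, c₁, h₁⟩ := hp
      obtain ⟨C₂, c₂, h₂⟩ := hq
      exact ⟨C₁ + C₂, c₁ + c₂, by simp [h₁, h₂, Matrix.fromBlocks_add, add_smul]⟩
  | monomial m a ih =>
      obtain ⟨C, c, h⟩ := ih
      refine ⟨Polynomial.aeval A (Polynomial.C a * Polynomial.X ^ m) * B, 0, ?_⟩
      have hpx : (Polynomial.C a * Polynomial.X ^ (m + 1) : Polynomial ℂ)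
          = (Polynomial.C a * Polynomial.X ^ m) * Polynomial.X := by ring
      have e1 : Polynomial.aeval (Matrix.fromBlocks A B (0 : Matrix (Fin k) (Fin n) ℂ) 0) (Polynomial.C a * Polynomial.X ^ (m + 1))
          = Polynomial.aeval (Matrix.fromBlocks A B 0 0) (Polynomial.C a * Polynomial.X ^ m) *
            Matrix.fromBlocks A B 0 0 := by
        rw [hpx, _root_.map_mul, Polynomial.aeval_X]
      have e2 : Polynomial.aeval A (Polynomial.C a * Polynomial.X ^ (m + 1))
          = Polynomial.aeval A (Polynomial.C a * Polynomial.X ^ m) * A := by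
        rw [hpx, _root_.map_mul, Polynomial.aeval_X]
      rw [e1, e2, h, Matrix.fromBlocks_multiply]
      simp

theorem stmt_14 {n k : ℕ} (A : Matrix (Fin n) (Fin n) ℂ) (B : Matrix (Fin n) (Fin k) ℂ)
    (p : Polynomial ℂ) (hp : p.Monic) :
    ∃ (P₁ : Matrix (Fin n) (Fin n) ℂ) (P₂ : Matrix (Fin k) (Fin k) ℂ)
      (R : Matrix (Fin n ⊕ Fin k) (Fin n ⊕ Fin k) ℂ),
      P₁ ∈ Matrix.unitaryGroup (Fin n) ℂ ∧ P₂ ∈ Matrix.unitaryGroup (Fin k) ℂ ∧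
      (∀ i j : Fin n ⊕ Fin k,
        (Sum.elim (fun a : Fin n => (a : ℕ)) (fun b : Fin k => n + (b : ℕ)) j <
          Sum.elim (fun a : Fin n => (a : ℕ)) (fun b : Fin k => n + (b : ℕ)) i) → R i j = 0) ∧
      Polynomial.aeval (Matrix.fromBlocks A B 0 0) p =
        Matrix.fromBlocks P₁ 0 0 P₂ * R ∧
      ∃ B' : Matrix (Fin n) (Fin k) ℂ,
        (Matrix.fromBlocks P₁ 0 0 P₂)ᴴ * Matrix.fromBlocks A B 0 0 *
            Matrix.fromBlocks P₁ 0 0 P₂ =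
          Matrix.fromBlocks (P₁ᴴ * A * P₁) B' 0 0 := by
  obtain ⟨C, c, hC⟩ := my_aeval_blocks A B p
  obtain ⟨Q, R₁, hQ, hR₁, hQR⟩ := my_exists_qr (Polynomial.aeval A p)
  have hQQ : Q * Qᴴ = 1 := by
    have := (Matrix.mem_unitaryGroup_iff).mp hQ
    rwa [Matrix.star_eq_conjTranspose] at this
  refine ⟨Q, 1, Matrix.fromBlocks R₁ (Qᴴ * C) 0 (c • 1), hQ, one_mem _, ?_, ?_, ?_⟩
  · rintro (a | a) (b | b) hij <;> simp only [Sum.elim_inl, Sum.elim_inr] at hij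
    · exact hR₁ a b hij
    · omega
    · simp [Matrix.fromBlocks]
    · have hab : a ≠ b := by omega
      simp [Matrix.fromBlocks, Matrix.one_apply_ne' (by omega : b ≠ a), hab.symm]
  · rw [hC, Matrix.fromBlocks_multiply]
    simp [hQR, ← Matrix.mul_assoc, hQQ]
  · refine ⟨Qᴴ * B, ?_⟩
    rw [Matrix.fromBlocks_conjTranspose, Matrix.fromBlocks_multiply,
      Matrix.fromBlocks_multiply]
    simp [Matrix.mul_assoc]
end
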